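/- arXiv:2405.08297 — 4 statements merged into one kernel-verified Lean document; each statement's English description precedes it below -/
import Mathlib

section
/- Every weak abductive explanation X intersects every weak contrastive explanation Y, i.e., WAXps are hitting sets of the set of WCXps. -/
def WAXp {m : ℕ} {K : Type*} (F : Set (Fin m → ℝ)) (κ : (Fin m → ℝ) → K)
    (v : Fin m → ℝ) (c : K) (X : Set (Fin m)) : Prop :=
  ∀ x ∈ F, (∀ i ∈ X, x i = v i) → κ x = c

def WCXp {m : ℕ} {K : Type*} (F : Set (Fin m → ℝ)) (κ : (Fin m → ℝ) → K)
    (v : Fin m → ℝ) (c : K) (Y : Set (Fin m)) : Prop :=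
  ∃ x ∈ F, (∀ i ∉ Y, x i = v i) ∧ κ x ≠ c

/-- Every WAXp intersects every WCXp. -/
theorem waxp_hits_wcxp {m : ℕ} {K : Type*} (F : Set (Fin m → ℝ))
    (κ : (Fin m → ℝ) → K) (v : Fin m → ℝ) (c : K)
    (hv : v ∈ F) (hc : κ v = c)
    (X Y : Set (Fin m)) (hX : WAXp F κ v c X) (hY : WCXp F κ v c Y) :
    (X ∩ Y).Nonempty := by
  obtain ⟨x, hxF, hagree, hne⟩ := hY
  by_contra h
  rw [Set.not_nonempty_iff_eq_empty] at h
  exact hne (hX x hxF fun i hiX => hagree i fun hiY =>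
    Set.eq_empty_iff_forall_notMem.mp h i ⟨hiX, hiY⟩)
end

section
/- A set X ⊆ F is an abductive explanation (AXp), i.e., a subset-minimal WAXp, if and only if X is a minimal hitting set of the collection of all contrastive explanations (CXps), i.e., all subset-minimal WCXps. -/
/-- AXp: a subset-minimal WAXp. -/
def AXp {m : ℕ} {K : Type*} (F : Set (Fin m → ℝ)) (κ : (Fin m → ℝ) → K)
    (v : Fin m → ℝ) (c : K) (X : Set (Fin m)) : Prop :=
  WAXp F κ v c X ∧ ∀ X' ⊂ X, ¬ WAXp F κ v c X'

/-- CXp: a subset-minimal WCXp. -/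
def CXp {m : ℕ} {K : Type*} (F : Set (Fin m → ℝ)) (κ : (Fin m → ℝ) → K)
    (v : Fin m → ℝ) (c : K) (Y : Set (Fin m)) : Prop :=
  WCXp F κ v c Y ∧ ∀ Y' ⊂ Y, ¬ WCXp F κ v c Y'

/-- H is a hitting set of the collection B. -/
def HittingSet {α : Type*} (B : Set (Set α)) (H : Set α) : Prop :=
  ∀ P ∈ B, (H ∩ P).Nonempty

/-- H is a minimal hitting set of B. -/
def MinHittingSet {α : Type*} (B : Set (Set α)) (H : Set α) : Prop :=
  HittingSet B H ∧ ∀ H' ⊂ H, ¬ HittingSet B H'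

/-- Every WCXp contains a CXp. -/
lemma wcxp_exists_cxp_subset {m : ℕ} {K : Type*} (F : Set (Fin m → ℝ))
    (κ : (Fin m → ℝ) → K) (v : Fin m → ℝ) (c : K) {Y : Set (Fin m)}
    (hY : WCXp F κ v c Y) : ∃ Z ⊆ Y, CXp F κ v c Z := by
  set S : Set (Set (Fin m)) := {Y' | Y' ⊆ Y ∧ WCXp F κ v c Y'} with hS
  obtain ⟨Z, hZ, hmin⟩ : ∃ Z ∈ S, ∀ Y' ∈ S, id Y' ≤ id Z → id Z = id Y' := by
    obtain ⟨Z, hZ, hmin⟩ := Set.Finite.exists_minimalFor id S (Set.toFinite S)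
      ⟨Y, subset_rfl, hY⟩
    exact ⟨Z, hZ, fun Y' hY' h => le_antisymm (hmin hY' h) h⟩
  refine ⟨Z, hZ.1, hZ.2, fun Y' hY' hw => ?_⟩
  have : Y' ∈ S := ⟨hY'.subset.trans hZ.1, hw⟩
  exact hY'.ne (hmin Y' this hY'.subset).symm

/-- X is a WAXp iff X hits every WCXp. -/
lemma waxp_iff_hits {m : ℕ} {K : Type*} (F : Set (Fin m → ℝ))
    (κ : (Fin m → ℝ) → K) (v : Fin m → ℝ) (c : K) (X : Set (Fin m)) :
    WAXp F κ v c X ↔ ∀ Y, WCXp F κ v c Y → (X ∩ Y).Nonempty := by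
  constructor
  · rintro h Y ⟨x, hx, hagree, hne⟩
    by_contra hemp
    rw [Set.not_nonempty_iff_eq_empty] at hemp
    exact hne (h x hx fun i hi => hagree i fun hiY =>
      Set.eq_empty_iff_forall_notMem.mp hemp i ⟨hi, hiY⟩)
  · intro h x hx hagree
    by_contra hne
    have hw : WCXp F κ v c {i | x i ≠ v i} :=
      ⟨x, hx, fun i hi => not_not.mp hi, hne⟩
    obtain ⟨i, hiX, hiY⟩ := h _ hw
    exact hiY (hagree i hiX)

/-- X is a WAXp iff X is a hitting set of the CXps. -/
lemma waxp_iff_hittingSet {m : ℕ} {K : Type*} (F : Set (Fin m → ℝ))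
    (κ : (Fin m → ℝ) → K) (v : Fin m → ℝ) (c : K) (X : Set (Fin m)) :
    WAXp F κ v c X ↔ HittingSet {Y | CXp F κ v c Y} X := by
  rw [waxp_iff_hits]
  constructor
  · exact fun h Y hY => h Y hY.1
  · intro h Y hY
    obtain ⟨Z, hZY, hZ⟩ := wcxp_exists_cxp_subset F κ v c hY
    obtain ⟨i, hiX, hiZ⟩ := h Z hZ
    exact ⟨i, hiX, hZY hiZ⟩

/-- MHS duality: X is an AXp iff X is a minimal hitting set of the CXps. -/
theorem axp_iff_mhs_of_cxps {m : ℕ} {K : Type*} (F : Set (Fin m → ℝ))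
    (κ : (Fin m → ℝ) → K) (v : Fin m → ℝ) (c : K)
    (hF : F.Finite) (hFne : F.Nonempty) (hv : v ∈ F) (hc : κ v = c)
    (X : Set (Fin m)) :
    AXp F κ v c X ↔ MinHittingSet {Y | CXp F κ v c Y} X := by
  unfold AXp MinHittingSet
  simp only [waxp_iff_hittingSet F κ v c]
end

section
/- A set Y ⊆ F is a contrastive explanation (CXp), i.e., a subset-minimal WCXp, if and only if Y is a minimal hitting set of the collection of all abductive explanations (AXps). -/
lemma waxp_compl_iff {m : ℕ} {K : Type*} (F : Set (Fin m → ℝ)) (κ : (Fin m → ℝ) → K)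
    (v : Fin m → ℝ) (c : K) (Y : Set (Fin m)) :
    WAXp F κ v c Yᶜ ↔ ¬ WCXp F κ v c Y := by
  unfold WAXp WCXp
  push_neg
  simp [Set.mem_compl_iff]

lemma exists_axp_subset {m : ℕ} {K : Type*} (F : Set (Fin m → ℝ)) (κ : (Fin m → ℝ) → K)
    (v : Fin m → ℝ) (c : K) (X : Set (Fin m)) (hX : WAXp F κ v c X) :
    ∃ X' ⊆ X, AXp F κ v c X' := by
  have hwf : WellFounded ((· < ·) : Set (Fin m) → Set (Fin m) → Prop) :=
    Finite.to_wellFoundedLT.wf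
  obtain ⟨Z, ⟨hZX, hZW⟩, hmin⟩ :=
    hwf.has_min {X' | X' ⊆ X ∧ WAXp F κ v c X'} ⟨X, subset_rfl, hX⟩
  refine ⟨Z, hZX, hZW, fun Z' hZ' hW' => ?_⟩
  exact hmin Z' ⟨hZ'.subset.trans hZX, hW'⟩ hZ'

lemma wcxp_hits {m : ℕ} {K : Type*} {F : Set (Fin m → ℝ)} {κ : (Fin m → ℝ) → K}
    {v : Fin m → ℝ} {c : K} {Y X : Set (Fin m)}
    (hY : WCXp F κ v c Y) (hX : WAXp F κ v c X) : (Y ∩ X).Nonempty := by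
  by_contra h
  rw [Set.not_nonempty_iff_eq_empty] at h
  obtain ⟨x, hxF, hag, hne⟩ := hY
  refine hne (hX x hxF fun i hi => hag i fun hiY => ?_)
  exact absurd (Set.mem_inter hiY hi) (by simp [h])

lemma hits_wcxp {m : ℕ} {K : Type*} {F : Set (Fin m → ℝ)} {κ : (Fin m → ℝ) → K}
    {v : Fin m → ℝ} {c : K} {Y : Set (Fin m)}
    (h : HittingSet {X | AXp F κ v c X} Y) : WCXp F κ v c Y := by
  by_contra hn
  rw [← waxp_compl_iff] at hn
  obtain ⟨X', hsub, hax⟩ := exists_axp_subset F κ v c Yᶜ hn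
  obtain ⟨i, hiY, hiX⟩ := h X' hax
  exact (hsub hiX) hiY

/-- MHS duality: Y is a CXp iff Y is a minimal hitting set of the AXps. -/
theorem cxp_iff_mhs_of_axps {m : ℕ} {K : Type*} (F : Set (Fin m → ℝ))
    (κ : (Fin m → ℝ) → K) (v : Fin m → ℝ) (c : K)
    (hF : F.Finite) (hFne : F.Nonempty) (hv : v ∈ F) (hc : κ v = c)
    (Y : Set (Fin m)) :
    CXp F κ v c Y ↔ MinHittingSet {X | AXp F κ v c X} Y := by
  constructor
  · rintro ⟨hW, hmin⟩
    refine ⟨fun X hX => wcxp_hits hW hX.1, fun Y' hY' hhit => ?_⟩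
    exact hmin Y' hY' (hits_wcxp hhit)
  · rintro ⟨hhit, hmin⟩
    refine ⟨hits_wcxp hhit, fun Y' hY' hW' => ?_⟩
    exact hmin Y' hY' (fun X hX => wcxp_hits hW' hX.1)
end

section
/- Correctness of the dichotomic search invariant: suppose W is an ordered set of features, S ⊆ F disjoint from W, S ∪ W_{1..j} is an ε-WAXp and S ∪ W_{1..j−1} is not an ε-WAXp (1 ≤ j ≤ |W|). Then the j-th feature of W is a member of every ε-AXp that contains S and is contained in S ∪ W_{1..j}. -/
open Real in
/-- The p-norm of a vector in ℝ^m. -/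
noncomputable def pNorm (p : ℝ) {m : ℕ} (z : Fin m → ℝ) : ℝ :=
  (∑ i, |z i| ^ p) ^ (1 / p)

/-- Distance-restricted weak abductive explanation (ε-WAXp). -/
def dWAXp {m : ℕ} {K : Type*} (F : Set (Fin m → ℝ)) (κ : (Fin m → ℝ) → K)
    (v : Fin m → ℝ) (c : K) (p ε : ℝ) (X : Set (Fin m)) : Prop :=
  ∀ x ∈ F, ((∀ i ∈ X, x i = v i) ∧ pNorm p (x - v) ≤ ε) → κ x = c

/-- Distance-restricted weak contrastive explanation (ε-WCXp). -/
def dWCXp {m : ℕ} {K : Type*} (F : Set (Fin m → ℝ)) (κ : (Fin m → ℝ) → K)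
    (v : Fin m → ℝ) (c : K) (p ε : ℝ) (Y : Set (Fin m)) : Prop :=
  ∃ x ∈ F, (∀ i ∉ Y, x i = v i) ∧ pNorm p (x - v) ≤ ε ∧ κ x ≠ c

/-- ε-AXp: a subset-minimal ε-WAXp. -/
def dAXp {m : ℕ} {K : Type*} (F : Set (Fin m → ℝ)) (κ : (Fin m → ℝ) → K)
    (v : Fin m → ℝ) (c : K) (p ε : ℝ) (X : Set (Fin m)) : Prop :=
  dWAXp F κ v c p ε X ∧ ∀ X' ⊂ X, ¬ dWAXp F κ v c p ε X'

/-- Dichotomic search invariant: if S ∪ W₁..j is an ε-WAXp and S ∪ W₁..j−1 is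
not, then the j-th feature of the ordered set W belongs to every ε-AXp that
contains S and is contained in S ∪ W₁..j. -/
theorem dichotomic_transition_feature {m : ℕ} {K : Type*}
    (F : Set (Fin m → ℝ)) (κ : (Fin m → ℝ) → K) (v : Fin m → ℝ) (c : K)
    (p ε : ℝ) (hv : v ∈ F) (hc : κ v = c) (hε : 0 < ε)
    (S : Set (Fin m)) (W : List (Fin m)) (hnd : W.Nodup)
    (hdisj : ∀ i ∈ W, i ∉ S)
    (j : ℕ) (hj1 : 1 ≤ j) (hj2 : j ≤ W.length)
    (h1 : dWAXp F κ v c p ε (S ∪ {i | i ∈ W.take j}))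
    (h2 : ¬ dWAXp F κ v c p ε (S ∪ {i | i ∈ W.take (j - 1)})) :
    ∀ A : Set (Fin m), dAXp F κ v c p ε A →
      S ⊆ A → A ⊆ S ∪ {i | i ∈ W.take j} →
      W.get ⟨j - 1, by omega⟩ ∈ A := by
  intro A hA hSA hAS
  by_contra hw
  apply h2
  have hsub : A ⊆ S ∪ {i | i ∈ W.take (j - 1)} := by
    intro i hi
    rcases hAS hi with h | h
    · exact Or.inl h
    · right
      have htake : W.take (j - 1) ++ [W.get ⟨j - 1, by omega⟩] = W.take j := by
        have := List.take_concat_get (by omega : j - 1 < W.length)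
        rw [Nat.sub_add_cancel hj1] at this; simpa using this
      have : i ∈ W.take (j - 1) ++ [W.get ⟨j - 1, by omega⟩] := by
        rw [htake]; exact h
      rcases List.mem_append.mp this with h' | h'
      · exact h'
      · exfalso; apply hw
        have : i = W.get ⟨j - 1, by omega⟩ := by simpa using h'
        rwa [this] at hi
  intro x hx ⟨hfix, hnorm⟩
  exact hA.1 x hx ⟨fun i hi => hfix i (hsub hi), hnorm⟩
end
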